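/- Let S be an idempotent semifield, A ∈ M_{m×n}(S) with all entries nonzero, b a regular m-vector, and Q' the matrix with entries q'_{ij} = b_i ⊗ a_{ij}⁻¹. If every row of Q' contains a column minimum element, then setting x_j = min_i q'_{ij} gives a solution of AX = b, and moreover this solution is maximal: every solution Y of AY = b satisfies Y ≤ X componentwise. -/

import Mathlib

/-- If every row of `Q'` (with `q'_{ij} = b_i ⊗ a_{ij}⁻¹`) contains a column
minimum element, then `x_j = min_i q'_{ij}` solves `A X = b` and is the maximal
solution: every solution `Y` satisfies `Y ≤ X` componentwise. -/
theorem stmt_15 {S : Type*} [Semifield S] (hid : ∀ a : S, a + a = a)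
    (htot : ∀ a b : S, a + b = b ∨ b + a = a) {m n : ℕ}
    (A : Matrix (Fin m) (Fin n) S) (hA : ∀ i j, A i j ≠ 0)
    (b : Fin m → S) (hb : ∀ i, b i ≠ 0)
    (Q : Matrix (Fin m) (Fin n) S) (hQ : ∀ i j, Q i j = b i * (A i j)⁻¹)
    (hrow : ∀ i, ∃ j, ∀ k, Q i j + Q k j = Q k j)
    (X : Fin n → S)
    (hX : ∀ j, (∀ i, X j + Q i j = Q i j) ∧ ∃ i, X j = Q i j) :
    A.mulVec X = b ∧ ∀ Y : Fin n → S, A.mulVec Y = b → ∀ j, Y j + X j = X j := by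
  -- basic lemmas about the order a ≤ b ↔ a + b = b
  have sum_le : ∀ (s : Finset (Fin n)) (f : Fin n → S) (c : S),
      (∀ j ∈ s, f j + c = c) → s.sum f + c = c := by
    intro s f c h
    induction s using Finset.induction with
    | empty => simp
    | insert x s hx ih =>
      rw [Finset.sum_insert hx, add_assoc,
        ih (fun j hj => h j (Finset.mem_insert_of_mem hj)),
        h _ (Finset.mem_insert_self _ _)]
  have term_le_sum : ∀ (f : Fin n → S) (j : Fin n),
      f j + ∑ k, f k = ∑ k, f k := by
    intro f j
    rw [← Finset.add_sum_erase _ f (Finset.mem_univ j), ← add_assoc, hid]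
  have hQcancel : ∀ i k, A i k * Q i k = b i := by
    intro i k
    rw [hQ, mul_comm (b i), ← mul_assoc, mul_inv_cancel₀ (hA i k), one_mul]
  have hterm_le : ∀ i k, A i k * X k + b i = b i := by
    intro i k
    have := (hX k).1 i
    calc A i k * X k + b i = A i k * X k + A i k * Q i k := by rw [hQcancel]
    _ = A i k * (X k + Q i k) := by rw [mul_add]
    _ = A i k * Q i k := by rw [this]
    _ = b i := hQcancel i k
  constructor
  · funext i
    show ∑ k, A i k * X k = b i
    obtain ⟨j, hj⟩ := hrow i
    -- X j = Q i j
    obtain ⟨i', hi'⟩ := (hX j).2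
    have hXj : X j = Q i j := by
      have h1 : X j + Q i j = Q i j := (hX j).1 i
      have h2 : Q i j + X j = X j := by rw [hi']; exact hj i'
      rw [← h2, add_comm, h1]
    have hbi : b i + ∑ k, A i k * X k = ∑ k, A i k * X k := by
      have : A i j * X j = b i := by rw [hXj, hQcancel]
      rw [← this]; exact term_le_sum (fun k => A i k * X k) j
    have hle : (∑ k, A i k * X k) + b i = b i :=
      sum_le Finset.univ _ (b i) (fun k _ => hterm_le i k)
    rw [← hbi, add_comm, hle]
  · intro Y hY j
    obtain ⟨i₀, h0⟩ := (hX j).2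
    have hsum : ∑ k, A i₀ k * Y k = b i₀ := congrFun hY i₀
    have h1 : A i₀ j * Y j + b i₀ = b i₀ := by
      rw [← hsum]; exact term_le_sum (fun k => A i₀ k * Y k) j
    have h2 : Y j + Q i₀ j = Q i₀ j := by
      have h3 := congrArg (fun t => (A i₀ j)⁻¹ * t) h1
      simp only [mul_add, ← mul_assoc, inv_mul_cancel₀ (hA i₀ j), one_mul] at h3
      rw [hQ, mul_comm (b i₀)]
      exact h3
    rw [h0, h2]
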